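/- In a bipartite unlabeled dependency graph, filling a 'free goal' (a goal vertex with at most one remaining neighbor) first never increases the optimal running buffer: if the remaining dependency graph has a free goal g, then there exists an optimal plan that fills g next. -/
import Mathlib


/-- A pick-n-place move in an unlabeled rearrangement instance with start vertices `S`
and goal vertices `G`: move the object at start `s` to the buffer, move a buffered
object to goal `g`, or move the object at start `s` directly to goal `g`. -/
inductive UMove (S G : Type*) where
  | toBuffer (s : S)
  | fromBuffer (g : G)
  | direct (s : S) (g : G)

/-- Effect of a move on the state `(R, F)`, where `R` is the set of start vertices whose
objects have been removed and `F` is the set of filled goal vertices.  The number of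
buffered objects in state `(R, F)` is `R.card - F.card`. -/
def ustep {S G : Type*} [DecidableEq S] [DecidableEq G] :
    UMove S G → Finset S × Finset G → Finset S × Finset G
  | .toBuffer s, (R, F) => (insert s R, F)
  | .fromBuffer g, (R, F) => (R, insert g F)
  | .direct s g, (R, F) => (insert s R, insert g F)

/-- The state reached after executing the moves in `l` from state `st`. -/
def uStateAfter {S G : Type*} [DecidableEq S] [DecidableEq G]
    (l : List (UMove S G)) (st : Finset S × Finset G) : Finset S × Finset G :=
  l.foldl (fun st m => ustep m st) st

/-- Validity of a sequence of moves from state `st`, for the bipartite dependency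
relation `adj` (`adj s g` meaning the disk at start `s` overlaps the disk at goal `g`):
an object can only be removed from a start once; a goal `g` can be filled from the
buffer only if the buffer is nonempty and all starts overlapping `g` have been cleared;
an object can be moved directly from start `s` to goal `g` only if all starts
overlapping `g` other than `s` itself have been cleared. -/
def uValidFrom {S G : Type*} [DecidableEq S] [DecidableEq G] (adj : S → G → Prop) :
    List (UMove S G) → Finset S × Finset G → Prop
  | [], _ => True
  | m :: rest, st =>
      (match m with
        | .toBuffer s => s ∉ st.1
        | .fromBuffer g => g ∉ st.2 ∧ st.2.card < st.1.card ∧ ∀ s, adj s g → s ∈ st.1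
        | .direct s g => s ∉ st.1 ∧ g ∉ st.2 ∧ ∀ s', adj s' g → s' ∈ insert s st.1) ∧
      uValidFrom adj rest (ustep m st)

/-- The peak buffer occupancy along the execution of `l` from state `st`. -/
def uPeakFrom {S G : Type*} [DecidableEq S] [DecidableEq G] :
    List (UMove S G) → Finset S × Finset G → ℕ
  | [], st => st.1.card - st.2.card
  | m :: rest, st => max (st.1.card - st.2.card) (uPeakFrom rest (ustep m st))

/-- A complete plan: a valid sequence of moves from the initial state which removes every
object from its start pose and fills every goal pose. -/
def UCompletePlan {S G : Type*} [DecidableEq S] [DecidableEq G] (adj : S → G → Prop)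
    (l : List (UMove S G)) : Prop :=
  uValidFrom adj l (∅, ∅) ∧
  (∀ s : S, s ∈ (uStateAfter l (∅, ∅)).1) ∧ (∀ g : G, g ∈ (uStateAfter l (∅, ∅)).2)

/-- The running buffer (peak buffer occupancy) of a plan. -/
def uPeak {S G : Type*} [DecidableEq S] [DecidableEq G] (l : List (UMove S G)) : ℕ :=
  uPeakFrom l (∅, ∅)


section helpers
variable {S G : Type*} [DecidableEq S] [DecidableEq G] {adj : S → G → Prop}

lemma uStateAfter_cons (m : UMove S G) (l : List (UMove S G)) (st) :
    uStateAfter (m :: l) st = uStateAfter l (ustep m st) := rfl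

lemma uStateAfter_append (a b : List (UMove S G)) (st) :
    uStateAfter (a ++ b) st = uStateAfter b (uStateAfter a st) :=
  List.foldl_append ..

lemma diff_le_uPeakFrom (l : List (UMove S G)) (st) :
    st.1.card - st.2.card ≤ uPeakFrom l st := by
  cases l <;> simp [uPeakFrom]

lemma uPeakFrom_append (a b : List (UMove S G)) (st) :
    uPeakFrom (a ++ b) st = max (uPeakFrom a st) (uPeakFrom b (uStateAfter a st)) := by
  induction a generalizing st with
  | nil =>
      rw [List.nil_append, uPeakFrom]
      exact (Nat.max_eq_right (diff_le_uPeakFrom b st)).symm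
      
  | cons m t ih =>
      simp [uPeakFrom, uStateAfter_cons, ih, Nat.max_assoc]

lemma uValidFrom_append {a b : List (UMove S G)} {st} :
    uValidFrom adj (a ++ b) st ↔
      uValidFrom adj a st ∧ uValidFrom adj b (uStateAfter a st) := by
  induction a generalizing st with
  | nil => simp [uValidFrom, uStateAfter]
  | cons m t ih =>
      simp only [List.cons_append, uValidFrom, List.append_eq]
      rw [ih, uStateAfter_cons, and_assoc]

end helpers

section pair
variable {S G : Type*} [DecidableEq S] [DecidableEq G]

lemma card_ins {α : Type*} [DecidableEq α] {a : α} {s : Finset α} (h : a ∉ s) :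
    (insert a s).card = s.card + 1 := Finset.card_insert_of_notMem h

lemma card_ins2 {α : Type*} [DecidableEq α] {a b : α} {s : Finset α}
    (hab : a ≠ b) (ha : a ∉ s) (hb : b ∉ s) :
    (insert a (insert b s)).card = s.card + 2 := by
  rw [Finset.card_insert_of_notMem (by simp [hab, ha]), Finset.card_insert_of_notMem hb]

lemma pair_swap (adj : S → G → Prop) (g : G) (hfree : {s | adj s g}.Subsingleton)
    (m f : UMove S G) (st : Finset S × Finset G)
    (hf : (∃ u, f = UMove.direct u g) ∨ f = UMove.fromBuffer g)
    (hv : uValidFrom adj [m, f] st) :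
    ∃ p : List (UMove S G), uValidFrom adj p st ∧
      uStateAfter p st = uStateAfter [m, f] st ∧
      uPeakFrom p st ≤ uPeakFrom [m, f] st ∧
      ((∃ s rest, p = UMove.direct s g :: rest) ∨ (∃ rest, p = UMove.fromBuffer g :: rest)) := by
  obtain ⟨R, F⟩ := st
  rcases hf with ⟨u, rfl⟩ | rfl
  · -- f = direct u g
    rcases m with s | h | ⟨s, h⟩
    · -- m = toBuffer s
      simp only [uValidFrom, ustep] at hv
      obtain ⟨hs, ⟨hu, hg, hadj⟩, -⟩ := hv
      simp only [Finset.mem_insert, not_or] at hu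
      obtain ⟨hus, huR⟩ := hu
      by_cases hall : ∀ s', adj s' g → s' ∈ insert u R
      · refine ⟨[UMove.direct u g, UMove.toBuffer s], ?_, ?_, ?_, Or.inl ⟨u, _, rfl⟩⟩
        · simp only [uValidFrom, ustep]
          refine ⟨⟨huR, hg, hall⟩, ?_, trivial⟩
          simp only [Finset.mem_insert, not_or]
          exact ⟨fun e => hus e.symm, hs⟩
        · simp only [uStateAfter, List.foldl, ustep, Prod.mk.injEq]
          all_goals constructor <;> first | rfl | trivial | exact Finset.insert_comm _ _ _
        · simp only [uPeakFrom, ustep]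
          have c1 := card_ins hs
          have c2 := card_ins huR
          have c3 := card_ins hg
          have c4 := card_ins2 hus huR hs  -- wrong shape? (insert u (insert s R))
          have c5 := card_ins2 (fun e => hus e.symm) hs huR
          omega
      · push_neg at hall
        obtain ⟨t, hatg, htu⟩ := hall
        have hts : t = s := by
          have := hadj t hatg
          simp only [Finset.mem_insert] at this htu
          tauto
        subst hts
        refine ⟨[UMove.direct t g, UMove.toBuffer u], ?_, ?_, ?_, Or.inl ⟨t, _, rfl⟩⟩
        · simp only [uValidFrom, ustep]
          refine ⟨⟨hs, hg, fun s' h' => by simp [hfree h' hatg]⟩, ?_, trivial⟩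
          simp only [Finset.mem_insert, not_or]
          exact ⟨hus, huR⟩
        · simp only [uStateAfter, List.foldl, ustep, Prod.mk.injEq]
          all_goals constructor <;> first | rfl | trivial | exact Finset.insert_comm _ _ _
        · simp only [uPeakFrom, ustep]
          have c1 := card_ins hs
          have c2 := card_ins huR
          have c3 := card_ins hg
          have c4 := card_ins2 hus huR hs
          have c5 := card_ins2 (fun e => hus e.symm) hs huR
          omega
    · -- m = fromBuffer h
      simp only [uValidFrom, ustep] at hv
      obtain ⟨⟨hh, hcard, hadjh⟩, ⟨hu, hg, hadj⟩, -⟩ := hv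
      simp only [Finset.mem_insert, not_or] at hg
      obtain ⟨hgh, hgF⟩ := hg
      refine ⟨[UMove.direct u g, UMove.fromBuffer h], ?_, ?_, ?_, Or.inl ⟨u, _, rfl⟩⟩
      · simp only [uValidFrom, ustep]
        refine ⟨⟨hu, hgF, hadj⟩, ⟨?_, ?_, fun s' h' => Finset.mem_insert_of_mem (hadjh s' h')⟩, trivial⟩
        · simp only [Finset.mem_insert, not_or]
          exact ⟨fun e => hgh e.symm, hh⟩
        · rw [card_ins hu, card_ins hgF]; omega
      · simp only [uStateAfter, List.foldl, ustep, Prod.mk.injEq]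
        all_goals constructor <;> first | rfl | trivial | exact Finset.insert_comm _ _ _
      · simp only [uPeakFrom, ustep]
        have c1 := card_ins hh
        have c2 := card_ins hu
        have c3 := card_ins hgF
        have c4 := card_ins2 (fun e => hgh e) hgF hh
        have c5 := card_ins2 (fun e => hgh e.symm) hh hgF
        omega
    · -- m = direct s h
      simp only [uValidFrom, ustep] at hv
      obtain ⟨⟨hsR, hhF, hadjh⟩, ⟨hu, hg, hadj⟩, -⟩ := hv
      simp only [Finset.mem_insert, not_or] at hu hg
      obtain ⟨hus, huR⟩ := hu
      obtain ⟨hgh, hgF⟩ := hg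
      by_cases hall : ∀ s', adj s' g → s' ∈ insert u R
      · refine ⟨[UMove.direct u g, UMove.direct s h], ?_, ?_, ?_, Or.inl ⟨u, _, rfl⟩⟩
        · simp only [uValidFrom, ustep]
          refine ⟨⟨huR, hgF, hall⟩, ⟨?_, ?_, ?_⟩, trivial⟩
          · simp only [Finset.mem_insert, not_or]
            exact ⟨fun e => hus e.symm, hsR⟩
          · simp only [Finset.mem_insert, not_or]
            exact ⟨fun e => hgh e.symm, hhF⟩
          · intro s' h'
            have := hadjh s' h'
            simp only [Finset.mem_insert] at this ⊢
            tauto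
        · simp only [uStateAfter, List.foldl, ustep, Prod.mk.injEq]
          all_goals constructor <;> first | rfl | trivial | exact Finset.insert_comm _ _ _
        · simp only [uPeakFrom, ustep]
          have c1 := card_ins hsR
          have c2 := card_ins hhF
          have c3 := card_ins huR
          have c4 := card_ins hgF
          have c5 := card_ins2 hus huR hsR
          have c6 := card_ins2 (fun e => hus e.symm) hsR huR
          have c7 := card_ins2 (fun e => hgh e) hgF hhF
          have c8 := card_ins2 (fun e => hgh e.symm) hhF hgF
          omega
      · push_neg at hall
        obtain ⟨t, hatg, htu⟩ := hall
        have hts : t = s := by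
          have := hadj t hatg
          simp only [Finset.mem_insert] at this htu
          tauto
        subst hts
        refine ⟨[UMove.direct t g, UMove.direct u h], ?_, ?_, ?_, Or.inl ⟨t, _, rfl⟩⟩
        · simp only [uValidFrom, ustep]
          refine ⟨⟨hsR, hgF, fun s' h' => by simp [hfree h' hatg]⟩, ⟨?_, ?_, ?_⟩, trivial⟩
          · simp only [Finset.mem_insert, not_or]
            exact ⟨hus, huR⟩
          · simp only [Finset.mem_insert, not_or]
            exact ⟨fun e => hgh e.symm, hhF⟩
          · intro s' h'
            have := hadjh s' h'
            simp only [Finset.mem_insert] at this ⊢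
            tauto
        · simp only [uStateAfter, List.foldl, ustep, Prod.mk.injEq]
          all_goals constructor <;> first | rfl | trivial | exact Finset.insert_comm _ _ _
        · simp only [uPeakFrom, ustep]
          have c1 := card_ins hsR
          have c2 := card_ins hhF
          have c3 := card_ins huR
          have c4 := card_ins hgF
          have c5 := card_ins2 hus huR hsR
          have c6 := card_ins2 (fun e => hus e.symm) hsR huR
          have c7 := card_ins2 (fun e => hgh e) hgF hhF
          have c8 := card_ins2 (fun e => hgh e.symm) hhF hgF
          omega
  · -- f = fromBuffer g
    rcases m with s | h | ⟨s, h⟩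
    · -- m = toBuffer s: merge into direct s g
      simp only [uValidFrom, ustep] at hv
      obtain ⟨hs, ⟨hg, hcard, hadj⟩, -⟩ := hv
      refine ⟨[UMove.direct s g], ?_, ?_, ?_, Or.inl ⟨s, _, rfl⟩⟩
      · exact ⟨⟨hs, hg, hadj⟩, trivial⟩
      · simp only [uStateAfter, List.foldl, ustep]
      · simp only [uPeakFrom, ustep]
        have c1 := card_ins hs
        have c2 := card_ins hg
        omega
    · -- m = fromBuffer h
      simp only [uValidFrom, ustep] at hv
      obtain ⟨⟨hh, hcard, hadjh⟩, ⟨hg, hcard2, hadj⟩, -⟩ := hv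
      simp only [Finset.mem_insert, not_or] at hg
      obtain ⟨hgh, hgF⟩ := hg
      rw [card_ins hh] at hcard2
      refine ⟨[UMove.fromBuffer g, UMove.fromBuffer h], ?_, ?_, ?_, Or.inr ⟨_, rfl⟩⟩
      · simp only [uValidFrom, ustep]
        refine ⟨⟨hgF, by omega, hadj⟩, ⟨?_, ?_, hadjh⟩, trivial⟩
        · simp only [Finset.mem_insert, not_or]
          exact ⟨fun e => hgh e.symm, hh⟩
        · rw [card_ins hgF]; omega
      · simp only [uStateAfter, List.foldl, ustep, Prod.mk.injEq]
        all_goals constructor <;> first | rfl | trivial | exact Finset.insert_comm _ _ _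
      · simp only [uPeakFrom, ustep]
        have c1 := card_ins hh
        have c2 := card_ins hgF
        have c3 := card_ins2 (fun e => hgh e) hgF hh
        have c4 := card_ins2 (fun e => hgh e.symm) hh hgF
        omega
    · -- m = direct s h
      simp only [uValidFrom, ustep] at hv
      obtain ⟨⟨hsR, hhF, hadjh⟩, ⟨hg, hcard, hadj⟩, -⟩ := hv
      simp only [Finset.mem_insert, not_or] at hg
      obtain ⟨hgh, hgF⟩ := hg
      rw [card_ins hhF, card_ins hsR] at hcard
      by_cases hall : ∀ s', adj s' g → s' ∈ R
      · refine ⟨[UMove.fromBuffer g, UMove.direct s h], ?_, ?_, ?_, Or.inr ⟨_, rfl⟩⟩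
        · simp only [uValidFrom, ustep]
          refine ⟨⟨hgF, by omega, hall⟩, ⟨hsR, ?_, hadjh⟩, trivial⟩
          simp only [Finset.mem_insert, not_or]
          exact ⟨fun e => hgh e.symm, hhF⟩
        · simp only [uStateAfter, List.foldl, ustep, Prod.mk.injEq]
          all_goals constructor <;> first | rfl | trivial | exact Finset.insert_comm _ _ _
        · simp only [uPeakFrom, ustep]
          have c1 := card_ins hsR
          have c2 := card_ins hhF
          have c3 := card_ins hgF
          have c4 := card_ins2 (fun e => hgh e) hgF hhF
          have c5 := card_ins2 (fun e => hgh e.symm) hhF hgF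
          omega
      · push_neg at hall
        obtain ⟨t, hatg, htR⟩ := hall
        have hts : t = s := by
          have := hadj t hatg
          simp only [Finset.mem_insert] at this
          tauto
        subst hts
        refine ⟨[UMove.direct t g, UMove.fromBuffer h], ?_, ?_, ?_, Or.inl ⟨t, _, rfl⟩⟩
        · simp only [uValidFrom, ustep]
          refine ⟨⟨hsR, hgF, fun s' h' => by simp [hfree h' hatg]⟩, ⟨?_, ?_, hadjh⟩, trivial⟩
          · simp only [Finset.mem_insert, not_or]
            exact ⟨fun e => hgh e.symm, hhF⟩
          · rw [card_ins hsR, card_ins hgF]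
            omega
        · simp only [uStateAfter, List.foldl, ustep, Prod.mk.injEq]
          all_goals constructor <;> first | rfl | trivial | exact Finset.insert_comm _ _ _
        · simp only [uPeakFrom, ustep]
          have c1 := card_ins hsR
          have c2 := card_ins hhF
          have c3 := card_ins hgF
          have c4 := card_ins2 (fun e => hgh e) hgF hhF
          have c5 := card_ins2 (fun e => hgh e.symm) hhF hgF
          omega

end pair

section main
variable {S G : Type*} [DecidableEq S] [DecidableEq G]

lemma uValidFrom_cons_iff (adj : S → G → Prop) (m : UMove S G) (l : List (UMove S G)) (st) :
    uValidFrom adj (m :: l) st ↔ uValidFrom adj [m] st ∧ uValidFrom adj l (ustep m st) := by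
  cases m <;> simp [uValidFrom]

lemma pull_fill_front (adj : S → G → Prop) (g : G) (hfree : {s | adj s g}.Subsingleton) :
    ∀ l : List (UMove S G), ∀ st : Finset S × Finset G,
      uValidFrom adj l st → g ∉ st.2 → g ∈ (uStateAfter l st).2 →
      ∃ l', uValidFrom adj l' st ∧ uStateAfter l' st = uStateAfter l st ∧
        uPeakFrom l' st ≤ uPeakFrom l st ∧
        ((∃ s rest, l' = UMove.direct s g :: rest) ∨
          (∃ rest, l' = UMove.fromBuffer g :: rest)) := by
  intro l
  induction l with
  | nil => intro st _ hg hg'; exact absurd hg' hg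
  | cons m rest ih =>
      intro st hv hg hg'
      by_cases hfill : (∃ u, m = UMove.direct u g) ∨ m = UMove.fromBuffer g
      · exact ⟨m :: rest, hv, rfl, le_rfl, by
          rcases hfill with ⟨u, rfl⟩ | rfl
          · exact Or.inl ⟨u, rest, rfl⟩
          · exact Or.inr ⟨rest, rfl⟩⟩
      · have hg2 : g ∉ (ustep m st).2 := by
          push_neg at hfill
          rcases m with s | h | ⟨s, h⟩
          · exact hg
          · have : h ≠ g := fun e => hfill.2 (by rw [e])
            obtain ⟨R, F⟩ := st
            simp only [ustep, Finset.mem_insert, not_or]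
            exact ⟨fun e => this e.symm, hg⟩
          · have : h ≠ g := fun e => hfill.1 s (by rw [e])
            obtain ⟨R, F⟩ := st
            simp only [ustep, Finset.mem_insert, not_or]
            exact ⟨fun e => this e.symm, hg⟩
        rw [uValidFrom_cons_iff] at hv
        obtain ⟨hm, hrest⟩ := hv
        rw [uStateAfter_cons] at hg'
        obtain ⟨rest', hval', hstate', hpeak', hhead'⟩ := ih (ustep m st) hrest hg2 hg'
        obtain ⟨f, r, rfl, hf⟩ : ∃ f r, rest' = f :: r ∧
            ((∃ u, f = UMove.direct u g) ∨ f = UMove.fromBuffer g) := by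
          rcases hhead' with ⟨s, r, e⟩ | ⟨r, e⟩
          · exact ⟨_, r, e, Or.inl ⟨s, rfl⟩⟩
          · exact ⟨_, r, e, Or.inr rfl⟩
        rw [uValidFrom_cons_iff] at hval'
        obtain ⟨hfv, hrv⟩ := hval'
        have hvmf : uValidFrom adj [m, f] st := by
          rw [uValidFrom_cons_iff]
          exact ⟨hm, hfv⟩
        obtain ⟨p, hpv, hpstate, hppeak, hphead⟩ := pair_swap adj g hfree m f st hf hvmf
        refine ⟨p ++ r, ?_, ?_, ?_, ?_⟩
        · rw [uValidFrom_append]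
          refine ⟨hpv, ?_⟩
          rw [hpstate]
          have : uStateAfter [m, f] st = ustep f (ustep m st) := rfl
          rw [this]
          exact hrv
        · rw [uStateAfter_append, hpstate]
          have e1 : uStateAfter [m, f] st = ustep f (ustep m st) := rfl
          rw [e1]
          have e2 : uStateAfter r (ustep f (ustep m st)) =
              uStateAfter (f :: r) (ustep m st) := rfl
          rw [e2, hstate']
          rfl
        · rw [uPeakFrom_append, hpstate]
          have e1 : uStateAfter [m, f] st = ustep f (ustep m st) := rfl
          rw [e1]
          have key : uPeakFrom (m :: f :: r) st ≤ uPeakFrom (m :: rest) st := by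
            rw [uPeakFrom, uPeakFrom]
            exact max_le (le_max_left _ _) (le_trans hpeak' (le_max_right _ _))
          refine le_trans (max_le ?_ ?_) key
          · refine le_trans hppeak ?_
            rw [uPeakFrom, uPeakFrom, uPeakFrom, uPeakFrom, uPeakFrom]
            simp only [ustep]
            exact max_le (le_max_left _ _)
              (max_le (le_max_of_le_right (le_max_left _ _))
                (le_max_of_le_right (le_max_of_le_right (diff_le_uPeakFrom _ _))))
          · rw [uPeakFrom, uPeakFrom]
            exact le_max_of_le_right (le_max_of_le_right le_rfl)
        · rcases hphead with ⟨s, pr, e⟩ | ⟨pr, e⟩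
          · exact Or.inl ⟨s, pr ++ r, by rw [e]; rfl⟩
          · exact Or.inr ⟨pr ++ r, by rw [e]; rfl⟩

end main

theorem fill_free_goal_first' {S G : Type*} [DecidableEq S] [DecidableEq G]
    (adj : S → G → Prop) (g : G) (hfree : {s | adj s g}.Subsingleton)
    (l : List (UMove S G)) (hl : uValidFrom adj l (∅, ∅) ∧
      (∀ s : S, s ∈ (uStateAfter l (∅, ∅)).1) ∧ (∀ g : G, g ∈ (uStateAfter l (∅, ∅)).2)) :
    ∃ l' : List (UMove S G), (uValidFrom adj l' (∅, ∅) ∧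
      (∀ s : S, s ∈ (uStateAfter l' (∅, ∅)).1) ∧ (∀ g : G, g ∈ (uStateAfter l' (∅, ∅)).2)) ∧
      uPeakFrom l' (∅, ∅) ≤ uPeakFrom l (∅, ∅) ∧
      ∃ rest : List (UMove S G),
        (∃ s, l' = UMove.direct s g :: rest) ∨ l' = UMove.fromBuffer g :: rest := by
  obtain ⟨hvalid, hS, hG⟩ := hl
  obtain ⟨l', hv', hst', hpeak', hhead'⟩ :=
    pull_fill_front adj g hfree l (∅, ∅) hvalid (by simp) (hG g)
  refine ⟨l', ⟨hv', ?_, ?_⟩, hpeak', ?_⟩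
  · intro s; rw [hst']; exact hS s
  · intro g'; rw [hst']; exact hG g'
  · rcases hhead' with ⟨s, rest, e⟩ | ⟨rest, e⟩
    · exact ⟨rest, Or.inl ⟨s, e⟩⟩
    · exact ⟨rest, Or.inr e⟩


/-- In a bipartite unlabeled dependency graph, filling a 'free goal'
(a goal vertex with at most one neighboring start vertex) first never increases the
optimal running buffer: for every complete plan there is a complete plan, no worse in
peak running buffer, whose first operation fills `g`. -/
theorem fill_free_goal_first {S G : Type*} [DecidableEq S] [DecidableEq G]
    (adj : S → G → Prop) (g : G) (hfree : {s | adj s g}.Subsingleton)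
    (l : List (UMove S G)) (hl : UCompletePlan adj l) :
    ∃ l' : List (UMove S G), UCompletePlan adj l' ∧ uPeak l' ≤ uPeak l ∧
      ∃ rest : List (UMove S G),
        (∃ s, l' = UMove.direct s g :: rest) ∨ l' = UMove.fromBuffer g :: rest := by
  obtain ⟨hvalid, hS, hG⟩ := hl
  obtain ⟨l', hv', hst', hpeak', hhead'⟩ :=
    pull_fill_front adj g hfree l (∅, ∅) hvalid (by simp) (hG g)
  refine ⟨l', ⟨hv', ?_, ?_⟩, hpeak', ?_⟩
  · intro s; rw [hst']; exact hS s
  · intro g'; rw [hst']; exact hG g'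
  · rcases hhead' with ⟨s, rest, e⟩ | ⟨rest, e⟩
    · exact ⟨rest, Or.inl ⟨s, e⟩⟩
    · exact ⟨rest, Or.inr e⟩
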